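/- Let a>0, b>0, α∈(1,2) and T>1. Then there exist constants c₁, c₂ > 0 (depending on a, b, α and T) such that for all ξ ∈ ℝ and all t with 1/T ≤ t ≤ T, one has | exp( −a ∫₀^t v_s(−iξ) ds ) | ≤ c₁ e^{−c₂ |ξ|^{2−α}}. -/

import Mathlib

set_option maxHeartbeats 2000000

open Real

/-- The complex extension of the function `v_s(z)`, defined via principal-branch
complex powers (with the convention `0 ^ β = 0`). -/
noncomputable def vC (b α : ℝ) (s : ℝ) (z : ℂ) : ℂ :=
  ((1 / ((α : ℂ) * (b : ℂ)) + z ^ ((1 : ℂ) - (α : ℂ))) * Complex.exp ((b * (α - 1) * s : ℝ) : ℂ)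
      - 1 / ((α : ℂ) * (b : ℂ))) ^ ((1 : ℂ) / (1 - (α : ℂ)))

noncomputable def uu (b α ξ s : ℝ) : ℂ :=
  (1 / ((α : ℂ) * (b : ℂ)) + (-Complex.I * (ξ:ℂ)) ^ ((1 : ℂ) - (α : ℂ)))
    * Complex.exp ((b * (α - 1) * s : ℝ) : ℂ) - 1 / ((α : ℂ) * (b : ℂ))

/-- The positive constant appearing in the pointwise lower bound. -/
noncomputable def Kc (α : ℝ) : ℝ :=
  (4+4*(α-1)/α) ^ (1/(1-α)) *
    Real.cos (Real.arctan (Real.sin (π*(α-1)/2)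
      / (Real.cos (π*(α-1)/2) + (α-1)/(2*α))) / (α-1))

lemma vC_eq_uu (b α ξ s : ℝ) :
    vC b α s (-Complex.I * (ξ:ℂ)) = uu b α ξ s ^ ((1 : ℂ) / (1 - (α : ℂ))) := rfl

lemma cpow_neg_I_mul (α : ℝ) (ξ : ℝ) (hξ : 0 < ξ) :
    (-Complex.I * (ξ:ℂ)) ^ ((1:ℂ) - (α:ℂ)) =
      Complex.ofReal (ξ ^ (1-α) * Real.cos (π*(α-1)/2)) +
        Complex.ofReal (ξ ^ (1-α) * Real.sin (π*(α-1)/2)) * Complex.I := by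
  have hz : -Complex.I * (ξ:ℂ) ≠ 0 := by
    simp [Complex.ext_iff, hξ.ne']
  rw [Complex.cpow_def_of_ne_zero hz]
  have habs : ‖-Complex.I * (ξ:ℂ)‖ = ξ := by
    simp [map_mul, abs_of_pos hξ]
  have harg : Complex.arg (-Complex.I * ξ) = -(π/2) := by
    rw [show -Complex.I * (ξ:ℂ) = (ξ:ℂ) * (-Complex.I) by ring]
    rw [Complex.arg_real_mul _ hξ, Complex.arg_neg_I]
  have hlog : Complex.log (-Complex.I * ξ) * ((1:ℂ) - α)
      = Complex.ofReal ((1-α) * Real.log ξ) + Complex.ofReal (π*(α-1)/2) * Complex.I := by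
    rw [Complex.log, habs, harg]
    push_cast
    ring
  rw [hlog, Complex.exp_add, Complex.exp_mul_I, Real.rpow_def_of_pos hξ,
    ← Complex.ofReal_exp, ← Complex.ofReal_cos, ← Complex.ofReal_sin]
  push_cast
  ring_nf

lemma cpow_neg_I_mul_neg (α : ℝ) (ξ : ℝ) (hξ : ξ < 0) :
    (-Complex.I * (ξ:ℂ)) ^ ((1:ℂ) - (α:ℂ)) =
      Complex.ofReal (|ξ| ^ (1-α) * Real.cos (π*(α-1)/2)) -
        Complex.ofReal (|ξ| ^ (1-α) * Real.sin (π*(α-1)/2)) * Complex.I := by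
  have hz : -Complex.I * (ξ:ℂ) ≠ 0 := by
    simp [Complex.ext_iff, hξ.ne]
  rw [Complex.cpow_def_of_ne_zero hz]
  have habs : ‖-Complex.I * (ξ:ℂ)‖ = |ξ| := by
    simp [map_mul]
  have harg : Complex.arg (-Complex.I * ξ) = π/2 := by
    rw [show -Complex.I * (ξ:ℂ) = ((|ξ|:ℝ):ℂ) * Complex.I by
      rw [abs_of_neg hξ]; push_cast; ring]
    rw [Complex.arg_real_mul _ (abs_pos.2 hξ.ne), Complex.arg_I]
  have hlog : Complex.log (-Complex.I * ξ) * ((1:ℂ) - α)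
      = Complex.ofReal ((1-α) * Real.log |ξ|) + Complex.ofReal (-(π*(α-1)/2)) * Complex.I := by
    rw [Complex.log, habs, harg]
    push_cast
    ring
  rw [hlog, Complex.exp_add, Complex.exp_mul_I, Real.rpow_def_of_pos (abs_pos.2 hξ.ne),
    ← Complex.ofReal_exp, ← Complex.ofReal_cos, ← Complex.ofReal_sin, Real.cos_neg, Real.sin_neg]
  push_cast
  ring_nf

lemma uu_eq (b α ξ s : ℝ) (hξ : ξ ≠ 0) :
    uu b α ξ s =
      Complex.ofReal (|ξ| ^ (1-α) * Real.exp (b*(α-1)*s) * Real.cos (π*(α-1)/2)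
          + (Real.exp (b*(α-1)*s) - 1)/(α*b))
        + Complex.ofReal ((if 0 < ξ then 1 else -1) * (|ξ| ^ (1-α) * Real.exp (b*(α-1)*s)
            * Real.sin (π*(α-1)/2))) * Complex.I := by
  rcases hξ.lt_or_gt with h | h
  · rw [uu, cpow_neg_I_mul_neg α ξ h, if_neg (by linarith), ← Complex.ofReal_exp]
    push_cast
    ring
  · rw [uu, cpow_neg_I_mul α ξ h, if_pos h, abs_of_pos h, ← Complex.ofReal_exp]
    push_cast
    ring

lemma re_cpow_real {w : ℂ} (hw : 0 < w.re) (r : ℝ) :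
    (w ^ (r:ℂ)).re = ‖w‖ ^ r * Real.cos (r * Complex.arg w) := by
  have hz : w ≠ 0 := fun h => by simp [h] at hw
  have habs : 0 < ‖w‖ := norm_pos_iff.mpr hz
  rw [Complex.cpow_def_of_ne_zero hz, Complex.exp_re, Complex.log]
  simp [Complex.add_re, Complex.add_im, Complex.mul_re, Complex.mul_im]
  rw [Real.rpow_def_of_pos habs]
  ring_nf

lemma arg_eq_arctan {w : ℂ} (hw : 0 < w.re) : Complex.arg w = Real.arctan (w.im / w.re) := by
  have h1 : |Complex.arg w| < π / 2 := Complex.abs_arg_lt_pi_div_two_iff.2 (Or.inl hw)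
  rw [← Complex.tan_arg, Real.arctan_tan (by cases abs_lt.1 h1; linarith) (abs_lt.1 h1).2]

lemma abs_arctan (x : ℝ) : |Real.arctan x| = Real.arctan |x| := by
  rcases le_or_gt 0 x with h | h
  · have h0 : 0 ≤ Real.arctan x := by
      rw [← Real.arctan_zero]; exact Real.arctan_strictMono.monotone h
    rw [abs_of_nonneg h, abs_of_nonneg h0]
  · have h0 : Real.arctan x < 0 := by
      rw [← Real.arctan_zero]; exact Real.arctan_strictMono h
    rw [abs_of_neg h, abs_of_neg h0, ← Real.arctan_neg]

lemma vC_re_eq (b α : ℝ) (hb : 0 < b) (hα : 1 < α) (hα2 : α < 2) (ξ s : ℝ) (hξ : ξ ≠ 0)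
    (hs : 0 ≤ s) :
    0 < (uu b α ξ s).re ∧
    (uu b α ξ s).re = |ξ| ^ (1-α) * Real.exp (b*(α-1)*s) * Real.cos (π*(α-1)/2)
        + (Real.exp (b*(α-1)*s) - 1)/(α*b) ∧
    |Complex.arg (uu b α ξ s)| =
      Real.arctan ((|ξ| ^ (1-α) * Real.exp (b*(α-1)*s) * Real.sin (π*(α-1)/2))
        / (uu b α ξ s).re) ∧
    |(uu b α ξ s).im| = |ξ| ^ (1-α) * Real.exp (b*(α-1)*s) * Real.sin (π*(α-1)/2) ∧
    (vC b α s (-Complex.I * ξ)).re =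
      ‖uu b α ξ s‖ ^ (1/(1-α)) * Real.cos (|Complex.arg (uu b α ξ s)| / (α-1)) := by
  have hπ := Real.pi_pos
  have hφ0 : 0 < π*(α-1)/2 := by nlinarith
  have hφ2 : π*(α-1)/2 < π/2 := by nlinarith
  have hcos : 0 < Real.cos (π*(α-1)/2) := Real.cos_pos_of_mem_Ioo ⟨by linarith, hφ2⟩
  have hsin : 0 < Real.sin (π*(α-1)/2) := Real.sin_pos_of_pos_of_lt_pi hφ0 (by linarith)
  have hρ : 0 < |ξ| ^ (1-α) := Real.rpow_pos_of_pos (abs_pos.2 hξ) _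
  have hE : 1 ≤ Real.exp (b*(α-1)*s) :=
    Real.one_le_exp (mul_nonneg (mul_nonneg hb.le (by linarith)) hs)
  have hr : 0 ≤ (Real.exp (b*(α-1)*s) - 1)/(α*b) :=
    div_nonneg (by linarith) (mul_pos (by linarith : (0:ℝ) < α) hb).le
  have hre : (uu b α ξ s).re = |ξ| ^ (1-α) * Real.exp (b*(α-1)*s) * Real.cos (π*(α-1)/2)
      + (Real.exp (b*(α-1)*s) - 1)/(α*b) := by
    rw [uu_eq b α ξ s hξ]
    simp only [Complex.add_re, Complex.add_im, Complex.ofReal_re, Complex.ofReal_im,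
      Complex.mul_re, Complex.mul_im, Complex.I_re, Complex.I_im]
    ring
  have him : (uu b α ξ s).im = (if 0 < ξ then 1 else -1) * (|ξ| ^ (1-α)
      * Real.exp (b*(α-1)*s) * Real.sin (π*(α-1)/2)) := by
    rw [uu_eq b α ξ s hξ]
    simp only [Complex.add_re, Complex.add_im, Complex.ofReal_re, Complex.ofReal_im,
      Complex.mul_re, Complex.mul_im, Complex.I_re, Complex.I_im]
    ring
  have hrepos : 0 < (uu b α ξ s).re := by
    rw [hre]
    have : 0 < |ξ| ^ (1-α) * Real.exp (b*(α-1)*s) * Real.cos (π*(α-1)/2) := by positivity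
    linarith
  have habsim : |(uu b α ξ s).im| = |ξ| ^ (1-α) * Real.exp (b*(α-1)*s)
      * Real.sin (π*(α-1)/2) := by
    rw [him, abs_mul]
    have h1 : |(if 0 < ξ then (1:ℝ) else -1)| = 1 := by split <;> norm_num
    rw [h1, one_mul, abs_of_pos (by positivity)]
  refine ⟨hrepos, hre, ?_, habsim, ?_⟩
  · rw [arg_eq_arctan hrepos, abs_arctan, abs_div, abs_of_pos hrepos, habsim]
  · rw [vC_eq_uu, show (1 : ℂ) / (1 - (α : ℂ)) = ((1/(1-α) : ℝ) : ℂ) by push_cast; ring,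
      re_cpow_real hrepos]
    congr 1
    rw [← Real.cos_abs (1 / (1 - α) * (uu b α ξ s).arg), abs_mul, abs_div, abs_one,
      abs_of_neg (by linarith : 1 - α < 0), ← Real.cos_abs (|(uu b α ξ s).arg| / (α-1))]
    congr 1
    rw [abs_div, abs_abs, abs_of_pos (by linarith : (0:ℝ) < α - 1)]
    ring

lemma vC_re_nonneg (b α : ℝ) (hb : 0 < b) (hα : 1 < α) (hα2 : α < 2) (ξ s : ℝ) (hξ : ξ ≠ 0)
    (hs : 0 ≤ s) : 0 ≤ (vC b α s (-Complex.I * ξ)).re := by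
  obtain ⟨h0, hre, harg, him, hv⟩ := vC_re_eq b α hb hα hα2 ξ s hξ hs
  have hπ := Real.pi_pos
  have hφ0 : 0 < π*(α-1)/2 := by nlinarith
  have hφ2 : π*(α-1)/2 < π/2 := by nlinarith
  have hcos : 0 < Real.cos (π*(α-1)/2) := Real.cos_pos_of_mem_Ioo ⟨by linarith, hφ2⟩
  have hsin : 0 < Real.sin (π*(α-1)/2) := Real.sin_pos_of_pos_of_lt_pi hφ0 (by linarith)
  have hρ : 0 < |ξ| ^ (1-α) := Real.rpow_pos_of_pos (abs_pos.2 hξ) _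
  have hE : 1 ≤ Real.exp (b*(α-1)*s) :=
    Real.one_le_exp (mul_nonneg (mul_nonneg hb.le (by linarith)) hs)
  have hr : 0 ≤ (Real.exp (b*(α-1)*s) - 1)/(α*b) :=
    div_nonneg (by linarith) (mul_pos (by linarith : (0:ℝ) < α) hb).le
  rw [hv]
  apply mul_nonneg (Real.rpow_nonneg (norm_nonneg _) _)
  apply Real.cos_nonneg_of_mem_Icc
  constructor
  · have : 0 ≤ |Complex.arg (uu b α ξ s)| / (α-1) :=
      div_nonneg (abs_nonneg _) (by linarith)
    linarith
  · rw [div_le_iff₀ (by linarith : (0:ℝ) < α - 1)]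
    have h1 : |ξ| ^ (1-α) * Real.exp (b*(α-1)*s) * Real.sin (π*(α-1)/2) / (uu b α ξ s).re
        ≤ Real.sin (π*(α-1)/2) / Real.cos (π*(α-1)/2) := by
      rw [div_le_div_iff₀ h0 hcos, hre]
      have hEp : 0 < Real.exp (b*(α-1)*s) := by linarith
      nlinarith [mul_pos (mul_pos hρ hEp) hsin, mul_nonneg hr hsin.le]
    have h2 : |Complex.arg (uu b α ξ s)| ≤ π*(α-1)/2 := by
      rw [harg, ← Real.tan_eq_sin_div_cos] at *
      calc Real.arctan _ ≤ Real.arctan (Real.tan (π*(α-1)/2)) :=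
            Real.arctan_strictMono.monotone h1
        _ = π*(α-1)/2 := Real.arctan_tan (by linarith) hφ2
    linarith [h2]

lemma Kc_pos (α : ℝ) (hα : 1 < α) (hα2 : α < 2) : 0 < Kc α := by
  have hπ := Real.pi_pos
  have hα0 : (0:ℝ) < α := by linarith
  have hα1 : (0:ℝ) < α - 1 := by linarith
  have hφ0 : 0 < π*(α-1)/2 := by nlinarith
  have hφ2 : π*(α-1)/2 < π/2 := by nlinarith
  have hcos : 0 < Real.cos (π*(α-1)/2) := Real.cos_pos_of_mem_Ioo ⟨by linarith, hφ2⟩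
  have hsin : 0 < Real.sin (π*(α-1)/2) := Real.sin_pos_of_pos_of_lt_pi hφ0 (by linarith)
  have hη : 0 < (α-1)/(2*α) := div_pos hα1 (by linarith)
  have hθφ : Real.arctan (Real.sin (π*(α-1)/2) / (Real.cos (π*(α-1)/2) + (α-1)/(2*α)))
      < π*(α-1)/2 := by
    have hlt : Real.sin (π*(α-1)/2) / (Real.cos (π*(α-1)/2) + (α-1)/(2*α))
        < Real.sin (π*(α-1)/2) / Real.cos (π*(α-1)/2) :=
      div_lt_div_of_pos_left hsin hcos (by linarith)
    rw [← Real.tan_eq_sin_div_cos] at hlt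
    calc Real.arctan _ < Real.arctan (Real.tan (π*(α-1)/2)) := Real.arctan_strictMono hlt
      _ = π*(α-1)/2 := Real.arctan_tan (by linarith) hφ2
  have hθ0 : 0 ≤ Real.arctan (Real.sin (π*(α-1)/2)
      / (Real.cos (π*(α-1)/2) + (α-1)/(2*α))) := by
    rw [← Real.arctan_zero]
    exact Real.arctan_strictMono.monotone (by positivity)
  have hδpos : 0 < Real.cos (Real.arctan (Real.sin (π*(α-1)/2)
        / (Real.cos (π*(α-1)/2) + (α-1)/(2*α))) / (α-1)) := by
    apply Real.cos_pos_of_mem_Ioo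
    constructor
    · have := div_nonneg hθ0 hα1.le
      linarith
    · rw [div_lt_iff₀ hα1]
      nlinarith
  have hM : (0:ℝ) < 4+4*(α-1)/α := by positivity
  exact mul_pos (Real.rpow_pos_of_pos hM _) hδpos

lemma vC_re_ge (b α : ℝ) (hb : 0 < b) (hα : 1 < α) (hα2 : α < 2) (ξ s : ℝ) (hξ : ξ ≠ 0)
    (hs1 : |ξ| ^ (1-α) ≤ s) (hs2 : s ≤ 2 * |ξ| ^ (1-α)) (hs3 : b*(α-1)*s ≤ 1/2) :
    Kc α * |ξ| ≤ (vC b α s (-Complex.I * ξ)).re := by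
  rw [Kc]
  have hπ := Real.pi_pos
  have hα0 : (0:ℝ) < α := by linarith
  have hα1 : (0:ℝ) < α - 1 := by linarith
  have hρ : 0 < |ξ| ^ (1-α) := Real.rpow_pos_of_pos (abs_pos.2 hξ) _
  have hs : 0 ≤ s := le_trans hρ.le hs1
  obtain ⟨h0, hre, harg, him, hv⟩ := vC_re_eq b α hb hα hα2 ξ s hξ hs
  have hφ0 : 0 < π*(α-1)/2 := by nlinarith
  have hφ2 : π*(α-1)/2 < π/2 := by nlinarith
  have hcos : 0 < Real.cos (π*(α-1)/2) := Real.cos_pos_of_mem_Ioo ⟨by linarith, hφ2⟩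
  have hsin : 0 < Real.sin (π*(α-1)/2) := Real.sin_pos_of_pos_of_lt_pi hφ0 (by linarith)
  have hcos1 : Real.cos (π*(α-1)/2) ≤ 1 := Real.cos_le_one _
  have hsin1 : Real.sin (π*(α-1)/2) ≤ 1 := Real.sin_le_one _
  have hx0 : 0 ≤ b*(α-1)*s := mul_nonneg (mul_nonneg hb.le hα1.le) hs
  have hE1 : 1 ≤ Real.exp (b*(α-1)*s) := Real.one_le_exp hx0
  have hE2 : Real.exp (b*(α-1)*s) ≤ 2 := by
    calc Real.exp (b*(α-1)*s) ≤ Real.exp (Real.log 2) :=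
          Real.exp_le_exp.2 (by linarith [Real.log_two_gt_d9])
      _ = 2 := Real.exp_log two_pos
  have hEinv : 1 - b*(α-1)*s ≤ Real.exp (-(b*(α-1)*s)) := by
    linarith [Real.add_one_le_exp (-(b*(α-1)*s))]
  have hEx : Real.exp (b*(α-1)*s) - 1 ≤ b*(α-1)*s * Real.exp (b*(α-1)*s) := by
    have h := mul_le_mul_of_nonneg_right hEinv (Real.exp_pos (b*(α-1)*s)).le
    rw [← Real.exp_add] at h
    simp at h
    nlinarith
  have hru : (Real.exp (b*(α-1)*s) - 1)/(α*b) ≤ 2*(α-1)*s/α := by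
    rw [div_le_div_iff₀ (mul_pos hα0 hb) hα0]
    nlinarith [mul_le_mul_of_nonneg_right hEx hα0.le,
      mul_le_mul_of_nonneg_left hE2 (mul_nonneg hx0 hα0.le)]
  have hrl : (α-1)*s/α ≤ (Real.exp (b*(α-1)*s) - 1)/(α*b) := by
    rw [div_le_div_iff₀ hα0 (mul_pos hα0 hb)]
    nlinarith [Real.add_one_le_exp (b*(α-1)*s)]
  have hη : 0 < (α-1)/(2*α) := div_pos hα1 (by linarith)
  have hρE2 : |ξ| ^ (1-α) * Real.exp (b*(α-1)*s) ≤ 2 * (|ξ| ^ (1-α)) := by nlinarith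
  have hkey : |ξ| ^ (1-α) * Real.exp (b*(α-1)*s) * ((α-1)/(2*α))
      ≤ (Real.exp (b*(α-1)*s) - 1)/(α*b) := by
    calc |ξ| ^ (1-α) * Real.exp (b*(α-1)*s) * ((α-1)/(2*α))
        ≤ 2 * (|ξ| ^ (1-α)) * ((α-1)/(2*α)) := mul_le_mul_of_nonneg_right hρE2 hη.le
      _ = (α-1) * (|ξ| ^ (1-α)) / α := by ring
      _ ≤ (α-1)*s/α := by
          apply (div_le_div_iff_of_pos_right hα0).2
          nlinarith
      _ ≤ _ := hrl
  have h1 : |ξ| ^ (1-α) * Real.exp (b*(α-1)*s) * Real.sin (π*(α-1)/2) / (uu b α ξ s).re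
      ≤ Real.sin (π*(α-1)/2) / (Real.cos (π*(α-1)/2) + (α-1)/(2*α)) := by
    rw [div_le_div_iff₀ h0 (by linarith), hre]
    nlinarith [mul_le_mul_of_nonneg_left hkey hsin.le]
  have hargle : |Complex.arg (uu b α ξ s)| ≤
      Real.arctan (Real.sin (π*(α-1)/2) / (Real.cos (π*(α-1)/2) + (α-1)/(2*α))) := by
    rw [harg]; exact Real.arctan_strictMono.monotone h1
  have hθφ : Real.arctan (Real.sin (π*(α-1)/2) / (Real.cos (π*(α-1)/2) + (α-1)/(2*α)))
      < π*(α-1)/2 := by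
    have hlt : Real.sin (π*(α-1)/2) / (Real.cos (π*(α-1)/2) + (α-1)/(2*α))
        < Real.sin (π*(α-1)/2) / Real.cos (π*(α-1)/2) :=
      div_lt_div_of_pos_left hsin hcos (by linarith)
    rw [← Real.tan_eq_sin_div_cos] at hlt
    calc Real.arctan _ < Real.arctan (Real.tan (π*(α-1)/2)) := Real.arctan_strictMono hlt
      _ = π*(α-1)/2 := Real.arctan_tan (by linarith) hφ2
  have hθ0 : 0 ≤ Real.arctan (Real.sin (π*(α-1)/2)
      / (Real.cos (π*(α-1)/2) + (α-1)/(2*α))) := by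
    rw [← Real.arctan_zero]
    exact Real.arctan_strictMono.monotone (by positivity)
  have hcoslb : Real.cos (Real.arctan (Real.sin (π*(α-1)/2)
        / (Real.cos (π*(α-1)/2) + (α-1)/(2*α))) / (α-1))
      ≤ Real.cos (|Complex.arg (uu b α ξ s)| / (α-1)) := by
    apply Real.cos_le_cos_of_nonneg_of_le_pi
    · exact div_nonneg (abs_nonneg _) hα1.le
    · rw [div_le_iff₀ hα1]
      nlinarith
    · exact (div_le_div_iff_of_pos_right hα1).2 hargle
  have hδpos : 0 < Real.cos (Real.arctan (Real.sin (π*(α-1)/2)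
        / (Real.cos (π*(α-1)/2) + (α-1)/(2*α))) / (α-1)) := by
    apply Real.cos_pos_of_mem_Ioo
    constructor
    · have := div_nonneg hθ0 hα1.le
      linarith
    · rw [div_lt_iff₀ hα1]
      nlinarith
  have hune : uu b α ξ s ≠ 0 := fun h => by simp [h] at h0
  have huabs : 0 < ‖uu b α ξ s‖ := norm_pos_iff.mpr hune
  have habs_le : ‖uu b α ξ s‖ ≤ (4+4*(α-1)/α) * (|ξ| ^ (1-α)) := by
    refine le_trans (Complex.norm_le_abs_re_add_abs_im _) ?_
    have h2 : |(uu b α ξ s).im| ≤ 2 * (|ξ| ^ (1-α)) := by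
      rw [him]
      nlinarith
    have h3 : |(uu b α ξ s).re| ≤ 2 * (|ξ| ^ (1-α)) + 2*(α-1)*s/α := by
      rw [abs_of_pos h0, hre]
      have : |ξ| ^ (1-α) * Real.exp (b*(α-1)*s) * Real.cos (π*(α-1)/2) ≤ 2 * (|ξ| ^ (1-α)) := by
        nlinarith
      linarith [hru]
    have h4 : 2*(α-1)*s/α ≤ 4*(α-1)/α * (|ξ| ^ (1-α)) := by
      rw [div_mul_eq_mul_div, div_le_div_iff_of_pos_right hα0]
      nlinarith
    calc |(uu b α ξ s).re| + |(uu b α ξ s).im|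
        ≤ (2 * (|ξ| ^ (1-α)) + 2*(α-1)*s/α) + 2 * (|ξ| ^ (1-α)) := by linarith
      _ ≤ (4+4*(α-1)/α) * (|ξ| ^ (1-α)) := by linarith [h4]
  have hpow : ((4+4*(α-1)/α) * (|ξ| ^ (1-α))) ^ (1/(1-α))
      ≤ ‖uu b α ξ s‖ ^ (1/(1-α)) :=
    Real.rpow_le_rpow_of_nonpos huabs habs_le
      (le_of_lt (div_neg_of_pos_of_neg one_pos (by linarith)))
  have hM : (0:ℝ) < 4+4*(α-1)/α := by positivity
  have hpow_eq : ((4+4*(α-1)/α) * (|ξ| ^ (1-α))) ^ (1/(1-α))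
      = (4+4*(α-1)/α) ^ (1/(1-α)) * |ξ| := by
    rw [Real.mul_rpow hM.le hρ.le, ← Real.rpow_mul (abs_nonneg ξ),
      mul_one_div, div_self (by linarith : (1:ℝ) - α ≠ 0), Real.rpow_one]
  rw [hv]
  calc (4+4*(α-1)/α) ^ (1/(1-α)) * Real.cos (Real.arctan (Real.sin (π*(α-1)/2)
          / (Real.cos (π*(α-1)/2) + (α-1)/(2*α))) / (α-1)) * |ξ|
      = ((4+4*(α-1)/α) ^ (1/(1-α)) * |ξ|) * Real.cos (Real.arctan (Real.sin (π*(α-1)/2)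
          / (Real.cos (π*(α-1)/2) + (α-1)/(2*α))) / (α-1)) := by ring
    _ ≤ ‖uu b α ξ s‖ ^ (1/(1-α))
          * Real.cos (|Complex.arg (uu b α ξ s)| / (α-1)) := by
        apply mul_le_mul (hpow_eq ▸ hpow) hcoslb hδpos.le (Real.rpow_nonneg huabs.le _)

lemma vC_continuousOn (b α : ℝ) (hb : 0 < b) (hα : 1 < α) (hα2 : α < 2) (ξ : ℝ) (hξ : ξ ≠ 0)
    (c d : ℝ) (hc : 0 ≤ c) (hd : 0 ≤ d) :
    ContinuousOn (fun s => vC b α s (-Complex.I * (ξ:ℂ))) (Set.uIcc c d) := by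
  have hu : Continuous (fun s => uu b α ξ s) := by
    unfold uu
    fun_prop
  apply continuousOn_of_forall_continuousAt
  intro s hs
  have hs0 : 0 ≤ s := by
    rcases Set.mem_uIcc.1 hs with ⟨h1, _⟩ | ⟨h1, _⟩ <;> linarith
  have hslit : uu b α ξ s ∈ Complex.slitPlane :=
    Complex.mem_slitPlane_iff.2 (Or.inl (vC_re_eq b α hb hα hα2 ξ s hξ hs0).1)
  have : ContinuousAt (fun s => uu b α ξ s ^ ((1 : ℂ) / (1 - (α : ℂ)))) s :=
    (continuousAt_cpow_const hslit).comp hu.continuousAt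
  exact this

lemma vC_zero_not_integrable (b α : ℝ) (hb : 0 < b) (hα : 1 < α) (hα2 : α < 2) (t : ℝ)
    (ht : 0 < t) :
    ¬ IntervalIntegrable (fun s => vC b α s (-Complex.I * ((0:ℝ):ℂ))) MeasureTheory.volume 0 t := by
  apply not_intervalIntegrable_of_sub_inv_isBigO_punctured (c := 0) ?_ ht.ne ?_
  swap
  · exact Set.left_mem_uIcc
  rw [Asymptotics.isBigO_iff]
  refine ⟨2*(α-1)/α, ?_⟩
  have hα1 : (0:ℝ) < α - 1 := by linarith
  have hα0 : (0:ℝ) < α := by linarith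
  set ε := min (1/(2*b*(α-1))) (α/(2*(α-1))) with hε
  have hεpos : 0 < ε := by
    apply lt_min (by positivity) (by positivity)
  have hev : ∀ᶠ x in nhdsWithin (0:ℝ) {0}ᶜ, |x| < ε := by
    apply eventually_nhdsWithin_of_eventually_nhds
    have := Metric.ball_mem_nhds (0:ℝ) hεpos
    filter_upwards [this] with x hx
    simpa [Real.dist_eq] using hx
  filter_upwards [hev, self_mem_nhdsWithin] with x hx hx0
  simp only [Set.mem_compl_iff, Set.mem_singleton_iff] at hx0
  have hval : vC b α x (-Complex.I * ((0:ℝ):ℂ)) =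
      (((Real.exp (b*(α-1)*x) - 1)/(α*b) : ℝ) : ℂ) ^ (((1/(1-α) : ℝ)) : ℂ) := by
    have h0 : -Complex.I * ((0:ℝ):ℂ) = 0 := by simp
    have hcast : (1 : ℂ) - (α:ℂ) = ((1 - α : ℝ) : ℂ) := by push_cast; ring
    have hne : (1 : ℂ) - (α:ℂ) ≠ 0 := by
      rw [hcast]
      exact Complex.ofReal_ne_zero.2 (by linarith)
    rw [h0, vC, Complex.zero_cpow hne, ← Complex.ofReal_exp]
    congr 1
    · push_cast; ring
    · push_cast; ring
  rw [hval]
  have hbβ : b*(α-1)*|x| < 1/2 := by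
    have h1 : |x| < 1/(2*b*(α-1)) := lt_of_lt_of_le hx (min_le_left _ _)
    rw [lt_div_iff₀ (by positivity)] at h1
    nlinarith
  have hxa : 2*(α-1)*|x|/α < 1 := by
    have h1 : |x| < α/(2*(α-1)) := lt_of_lt_of_le hx (min_le_right _ _)
    rw [lt_div_iff₀ (by positivity)] at h1
    rw [div_lt_one hα0]
    nlinarith
  have hxpos : 0 < |x| := abs_pos.2 hx0
  have hEne : Real.exp (b*(α-1)*x) ≠ 1 := by
    intro h
    have h2 : b*(α-1)*x = 0 := Real.exp_injective (by rw [h, Real.exp_zero])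
    exact (mul_ne_zero (mul_ne_zero hb.ne' (by linarith : α - 1 ≠ 0)) hx0) h2
  have hu_ne : (Real.exp (b*(α-1)*x) - 1)/(α*b) ≠ 0 :=
    div_ne_zero (sub_ne_zero.2 hEne) (mul_pos hα0 hb).ne'
  have hu_pos : 0 < |(Real.exp (b*(α-1)*x) - 1)/(α*b)| := abs_pos.2 hu_ne
  have habs_cpow : ‖(((Real.exp (b*(α-1)*x) - 1)/(α*b) : ℝ) : ℂ)
        ^ (((1/(1-α) : ℝ)) : ℂ)‖
      = |(Real.exp (b*(α-1)*x) - 1)/(α*b)| ^ (1/(1-α)) := by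
    rw [Complex.norm_cpow_of_ne_zero (Complex.ofReal_ne_zero.2 hu_ne), Complex.ofReal_re,
      Complex.ofReal_im, mul_zero, Real.exp_zero, div_one, Complex.norm_real, Real.norm_eq_abs]
  have hE_bound : |Real.exp (b*(α-1)*x) - 1| ≤ 2*(b*(α-1))*|x| := by
    rcases lt_or_gt_of_ne hx0 with hneg | hpos
    · have hx' : b*(α-1)*x < 0 := by nlinarith [mul_pos (mul_pos hb hα1) (neg_pos.2 hneg)]
      have hE1 : Real.exp (b*(α-1)*x) < 1 := by
        calc Real.exp (b*(α-1)*x) < Real.exp 0 := Real.exp_lt_exp.2 hx'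
          _ = 1 := Real.exp_zero
      rw [abs_of_neg hneg]
      rw [abs_of_nonpos (by linarith)]
      have := Real.add_one_le_exp (b*(α-1)*x)
      nlinarith
    · have hx' : 0 ≤ b*(α-1)*x := by positivity
      have hE1 : 1 ≤ Real.exp (b*(α-1)*x) := Real.one_le_exp hx'
      rw [abs_of_pos hpos] at *
      rw [abs_of_nonneg (by linarith)]
      have hE2 : Real.exp (b*(α-1)*x) ≤ 2 := by
        calc Real.exp (b*(α-1)*x) ≤ Real.exp (Real.log 2) :=
              Real.exp_le_exp.2 (by linarith [Real.log_two_gt_d9])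
          _ = 2 := Real.exp_log two_pos
      have hEinv : 1 - b*(α-1)*x ≤ Real.exp (-(b*(α-1)*x)) := by
        linarith [Real.add_one_le_exp (-(b*(α-1)*x))]
      have h := mul_le_mul_of_nonneg_right hEinv (Real.exp_pos (b*(α-1)*x)).le
      rw [← Real.exp_add] at h
      simp at h
      nlinarith
  have hu_le : |(Real.exp (b*(α-1)*x) - 1)/(α*b)| ≤ 2*(α-1)*|x|/α := by
    rw [abs_div, abs_of_pos (mul_pos hα0 hb), div_le_div_iff₀ (mul_pos hα0 hb) hα0]
    nlinarith
  have hB : (0:ℝ) < 2*(α-1)*|x|/α := by positivity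
  have hstep1 : (2*(α-1)*|x|/α) ^ (1/(1-α))
      ≤ |(Real.exp (b*(α-1)*x) - 1)/(α*b)| ^ (1/(1-α)) :=
    Real.rpow_le_rpow_of_nonpos hu_pos hu_le
      (le_of_lt (div_neg_of_pos_of_neg one_pos (by linarith)))
  have hexple : 1/(1-α) ≤ (-1 : ℝ) := by
    rw [div_le_iff_of_neg (by linarith : (1:ℝ)-α < 0)]
    linarith
  have hstep2 : (2*(α-1)*|x|/α) ^ ((-1:ℝ)) ≤ (2*(α-1)*|x|/α) ^ (1/(1-α)) :=
    Real.rpow_le_rpow_of_exponent_ge hB hxa.le hexple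
  have hstep3 : (2*(α-1)*|x|/α) ^ ((-1:ℝ)) = (2*(α-1)*|x|/α)⁻¹ := Real.rpow_neg_one _
  simp only [sub_zero]
  rw [Real.norm_eq_abs, abs_inv, habs_cpow]
  have heq : (2*(α-1)/α) * (2*(α-1)*|x|/α)⁻¹ = |x|⁻¹ := by
    field_simp
  calc |x|⁻¹ = (2*(α-1)/α) * (2*(α-1)*|x|/α)⁻¹ := heq.symm
    _ ≤ (2*(α-1)/α) * |(Real.exp (b*(α-1)*x) - 1)/(α*b)| ^ (1/(1-α)) := by
        apply mul_le_mul_of_nonneg_left _ (by positivity)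
        rw [← hstep3]
        exact le_trans hstep2 hstep1

theorem stmt_6 (a b α T : ℝ) (ha : 0 < a) (hb : 0 < b) (hα : 1 < α) (hα2 : α < 2) (hT : 1 < T) :
    ∃ c₁ c₂ : ℝ, 0 < c₁ ∧ 0 < c₂ ∧
      ∀ ξ : ℝ, ∀ t : ℝ, 1 / T ≤ t → t ≤ T →
        ‖Complex.exp (-(a : ℂ) * ∫ s in (0:ℝ)..t, vC b α s (-Complex.I * (ξ : ℂ)))‖ ≤
          c₁ * Real.exp (-c₂ * |ξ| ^ (2 - α)) := by
  have hα1 : (0:ℝ) < α - 1 := by linarith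
  have hα0 : (0:ℝ) < α := by linarith
  have hT0 : (0:ℝ) < T := by linarith
  have hbβ : 0 < b * (α - 1) := mul_pos hb hα1
  have hB1 : (1:ℝ) ≤ 2*T + 4*b*(α-1) + 2 := by nlinarith
  have hBpos : (0:ℝ) < 2*T + 4*b*(α-1) + 2 := by linarith
  have hξ₀1 : 1 ≤ (2*T + 4*b*(α-1) + 2) ^ (1/(α-1)) :=
    Real.one_le_rpow hB1 (by positivity)
  have hξ₀pos : 0 < (2*T + 4*b*(α-1) + 2) ^ (1/(α-1)) := lt_of_lt_of_le one_pos hξ₀1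
  have hKpos : 0 < Kc α := Kc_pos α hα hα2
  refine ⟨Real.exp (a * Kc α * ((2*T + 4*b*(α-1) + 2) ^ (1/(α-1))) ^ (2-α)), a * Kc α,
    Real.exp_pos _, mul_pos ha hKpos, ?_⟩
  intro ξ t ht1 ht2
  have ht0 : 0 < t := lt_of_lt_of_le (by positivity) ht1
  rw [Complex.norm_exp,
    show -(a:ℂ) * ∫ s in (0:ℝ)..t, vC b α s (-Complex.I * (ξ:ℂ))
      = ((-a : ℝ) : ℂ) * ∫ s in (0:ℝ)..t, vC b α s (-Complex.I * (ξ:ℂ)) by push_cast; ring,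
    Complex.re_ofReal_mul, ← Real.exp_add, Real.exp_le_exp]
  have hc2nn : 0 ≤ a * Kc α * ((2*T + 4*b*(α-1) + 2) ^ (1/(α-1))) ^ (2-α) :=
    mul_nonneg (mul_pos ha hKpos).le (Real.rpow_nonneg hξ₀pos.le _)
  suffices h : a * Kc α * |ξ| ^ (2-α)
      - a * Kc α * ((2*T + 4*b*(α-1) + 2) ^ (1/(α-1))) ^ (2-α)
      ≤ a * (∫ s in (0:ℝ)..t, vC b α s (-Complex.I * (ξ:ℂ))).re by linarith
  by_cases hξ0 : ξ = 0
  · subst hξ0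
    rw [intervalIntegral.integral_undef (vC_zero_not_integrable b α hb hα hα2 t ht0)]
    simp only [Complex.zero_re, mul_zero, abs_zero]
    rw [Real.zero_rpow (by linarith : (2:ℝ) - α ≠ 0)]
    linarith
  · have hInt : IntervalIntegrable (fun s => vC b α s (-Complex.I * (ξ:ℂ)))
        MeasureTheory.volume 0 t :=
      (vC_continuousOn b α hb hα hα2 ξ hξ0 0 t le_rfl ht0.le).intervalIntegrable
    have hre_int : (∫ s in (0:ℝ)..t, vC b α s (-Complex.I * (ξ:ℂ))).re
        = ∫ s in (0:ℝ)..t, (vC b α s (-Complex.I * (ξ:ℂ))).re := by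
      have h := Complex.reCLM.intervalIntegral_comp_comm hInt
      simpa using h.symm
    have hIntRe : ∀ c d : ℝ, 0 ≤ c → 0 ≤ d →
        IntervalIntegrable (fun s => (vC b α s (-Complex.I * (ξ:ℂ))).re)
          MeasureTheory.volume c d := fun c d hc hd =>
      (Complex.continuous_re.comp_continuousOn
        (vC_continuousOn b α hb hα hα2 ξ hξ0 c d hc hd)).intervalIntegrable
    rw [hre_int]
    by_cases hle : |ξ| ≤ (2*T + 4*b*(α-1) + 2) ^ (1/(α-1))
    · have hIre : 0 ≤ ∫ s in (0:ℝ)..t, (vC b α s (-Complex.I * (ξ:ℂ))).re :=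
        intervalIntegral.integral_nonneg ht0.le
          (fun u hu => vC_re_nonneg b α hb hα hα2 ξ u hξ0 hu.1)
      have hX : |ξ| ^ (2-α) ≤ ((2*T + 4*b*(α-1) + 2) ^ (1/(α-1))) ^ (2-α) :=
        Real.rpow_le_rpow (abs_nonneg _) hle (by linarith)
      nlinarith [mul_nonneg ha.le hIre, mul_le_mul_of_nonneg_left hX (mul_pos ha hKpos).le]
    · push_neg at hle
      have hξpos : 0 < |ξ| := lt_trans hξ₀pos hle
      have hρpos : 0 < |ξ| ^ (1-α) := Real.rpow_pos_of_pos hξpos _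
      have hPB : 2*T + 4*b*(α-1) + 2 ≤ |ξ| ^ (α-1) := by
        have h1 : ((2*T + 4*b*(α-1) + 2) ^ (1/(α-1))) ^ (α-1) ≤ |ξ| ^ (α-1) :=
          Real.rpow_le_rpow hξ₀pos.le hle.le hα1.le
        rwa [← Real.rpow_mul hBpos.le, one_div_mul_cancel hα1.ne', Real.rpow_one] at h1
      have hρP : |ξ| ^ (1-α) * |ξ| ^ (α-1) = 1 := by
        rw [← Real.rpow_add hξpos]
        norm_num
      have hρB : |ξ| ^ (1-α) * (2*T + 4*b*(α-1) + 2) ≤ 1 := by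
        calc |ξ| ^ (1-α) * (2*T + 4*b*(α-1) + 2) ≤ |ξ| ^ (1-α) * |ξ| ^ (α-1) :=
              mul_le_mul_of_nonneg_left hPB hρpos.le
          _ = 1 := hρP
      have h2ρ : 2 * (|ξ| ^ (1-α)) ≤ 1/T := by
        rw [le_div_iff₀ hT0]
        nlinarith
      have hsub : 2 * (|ξ| ^ (1-α)) ≤ t := le_trans h2ρ ht1
      have hbβs : ∀ s : ℝ, s ≤ 2 * (|ξ| ^ (1-α)) → b*(α-1)*s ≤ 1/2 := by
        intro s hs
        nlinarith
      have hi1 := hIntRe 0 (|ξ| ^ (1-α)) le_rfl hρpos.le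
      have hi2 := hIntRe (|ξ| ^ (1-α)) (2 * (|ξ| ^ (1-α))) hρpos.le (by linarith)
      have hi12 := hIntRe 0 (2 * (|ξ| ^ (1-α))) le_rfl (by linarith)
      have hi3 := hIntRe (2 * (|ξ| ^ (1-α))) t (by linarith) ht0.le
      have hadd1 := intervalIntegral.integral_add_adjacent_intervals hi1 hi2
      have hadd2 := intervalIntegral.integral_add_adjacent_intervals hi12 hi3
      have hs1 : 0 ≤ ∫ s in (0:ℝ)..(|ξ| ^ (1-α)), (vC b α s (-Complex.I * (ξ:ℂ))).re :=
        intervalIntegral.integral_nonneg hρpos.le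
          (fun u hu => vC_re_nonneg b α hb hα hα2 ξ u hξ0 hu.1)
      have hs3 : 0 ≤ ∫ s in (2 * (|ξ| ^ (1-α)))..t, (vC b α s (-Complex.I * (ξ:ℂ))).re :=
        intervalIntegral.integral_nonneg hsub
          (fun u hu => vC_re_nonneg b α hb hα hα2 ξ u hξ0 (le_trans (by positivity) hu.1))
      have hs2 : (|ξ| ^ (1-α)) * (Kc α * |ξ|)
          ≤ ∫ s in (|ξ| ^ (1-α))..(2 * (|ξ| ^ (1-α))), (vC b α s (-Complex.I * (ξ:ℂ))).re := by
        calc (|ξ| ^ (1-α)) * (Kc α * |ξ|)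
            = (2 * (|ξ| ^ (1-α)) - (|ξ| ^ (1-α))) • (Kc α * |ξ|) := by
              rw [smul_eq_mul]; ring
          _ = ∫ _ in (|ξ| ^ (1-α))..(2 * (|ξ| ^ (1-α))), (Kc α * |ξ|) :=
              (intervalIntegral.integral_const _).symm
          _ ≤ _ := by
              apply intervalIntegral.integral_mono_on (by linarith) intervalIntegrable_const hi2
              intro u hu
              exact vC_re_ge b α hb hα hα2 ξ u hξ0 hu.1 hu.2 (hbβs u hu.2)
      have htotal : (|ξ| ^ (1-α)) * (Kc α * |ξ|)
          ≤ ∫ s in (0:ℝ)..t, (vC b α s (-Complex.I * (ξ:ℂ))).re := by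
        rw [← hadd2, ← hadd1]
        linarith
      have hrw : |ξ| ^ (2-α) = |ξ| ^ (1-α) * |ξ| := by
        rw [show (2:ℝ)-α = (1-α)+1 by ring, Real.rpow_add hξpos, Real.rpow_one]
      have hfin : Kc α * |ξ| ^ (2-α)
          ≤ ∫ s in (0:ℝ)..t, (vC b α s (-Complex.I * (ξ:ℂ))).re := by
        rw [hrw]
        calc Kc α * (|ξ| ^ (1-α) * |ξ|) = (|ξ| ^ (1-α)) * (Kc α * |ξ|) := by ring
          _ ≤ _ := htotal
      nlinarith [mul_le_mul_of_nonneg_left hfin ha.le]
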